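/- Let μ be the standard Gaussian probability measure on ℝ, let σ > 0, Δ > 0 and ν ∈ ℝ, and write S(z) = σ√Δ·z + (1/2)σ²Δ·(z² − 1). Then ∫_ℝ z·exp(iν·S(z)) dμ(z) = (iνσ√Δ / (1 − iνσ²Δ)) · ∫_ℝ exp(iν·S(z)) dμ(z). -/

import Mathlib

open MeasureTheory ProbabilityTheory Real Complex Filter


lemma norm_cexp_quad (b c : ℂ) (x : ℝ) :
    ‖Complex.exp (b * x ^ 2 + c * x)‖ = Real.exp (b.re * x ^ 2 + c.re * x) := by
  rw [Complex.norm_exp]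
  congr 1
  simp [Complex.add_re, Complex.mul_re, ← Complex.ofReal_pow]

lemma integrable_rexp_quad {br : ℝ} (hb : br < 0) (cr : ℝ) :
    Integrable (fun x : ℝ => Real.exp (br * x ^ 2 + cr * x)) := by
  have h := (integrable_cexp_quadratic' (b := (br : ℂ)) (by simpa using hb) (cr : ℂ) 0).norm
  refine h.congr (Filter.Eventually.of_forall fun x => ?_)
  simp only [add_zero]
  rw [norm_cexp_quad]
  simp

lemma integrable_id_mul_cexp_quad {b : ℂ} (hb : b.re < 0) (c : ℂ) :
    Integrable (fun x : ℝ => (x : ℂ) * Complex.exp (b * x ^ 2 + c * x)) := by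
  have hg : Integrable (fun x : ℝ =>
      Real.exp (b.re * x ^ 2 + (c.re + 1) * x) + Real.exp (b.re * x ^ 2 + (c.re - 1) * x)) :=
    (integrable_rexp_quad hb _).add (integrable_rexp_quad hb _)
  refine Integrable.mono' hg ?_ (Filter.Eventually.of_forall fun x => ?_)
  · exact (Complex.continuous_ofReal.mul
      (Complex.continuous_exp.comp (by continuity))).aestronglyMeasurable
  · rw [norm_mul, Complex.norm_real, norm_cexp_quad]
    have h1 : |x| ≤ Real.exp x + Real.exp (-x) := by
      rcases le_or_gt 0 x with h | h
      · rw [_root_.abs_of_nonneg h]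
        nlinarith [Real.add_one_le_exp x, Real.exp_pos (-x)]
      · rw [_root_.abs_of_neg h]
        nlinarith [Real.add_one_le_exp (-x), Real.exp_pos x]
    calc |x| * Real.exp (b.re * x ^ 2 + c.re * x)
        ≤ (Real.exp x + Real.exp (-x)) * Real.exp (b.re * x ^ 2 + c.re * x) :=
          mul_le_mul_of_nonneg_right h1 (Real.exp_pos _).le
      _ = _ := by rw [add_mul, ← Real.exp_add, ← Real.exp_add]; ring_nf

lemma tendsto_quad_atBot_atTop {br : ℝ} (hb : br < 0) (cr : ℝ) :
    Tendsto (fun x : ℝ => br * x ^ 2 + cr * x) atTop atBot := by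
  have h1 : Tendsto (fun x : ℝ => x * (br * x + cr)) atTop atBot :=
    tendsto_id.atTop_mul_atBot₀
      (by simpa using (tendsto_id.const_mul_atTop_of_neg hb).atBot_add tendsto_const_nhds)
  exact h1.congr (fun x => by ring)

lemma tendsto_quad_atBot_atBot {br : ℝ} (hb : br < 0) (cr : ℝ) :
    Tendsto (fun x : ℝ => br * x ^ 2 + cr * x) atBot atBot := by
  have h1 : Tendsto (fun x : ℝ => x * (br * x + cr)) atBot atBot :=
    Tendsto.atBot_mul_atTop₀ tendsto_id
      (by simpa using (tendsto_id.const_mul_atBot_of_neg hb).atTop_add tendsto_const_nhds)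
  exact h1.congr (fun x => by ring)

lemma tendsto_cexp_quad_zero {b : ℂ} (c : ℂ) (l : Filter ℝ)
    (hl : Tendsto (fun x : ℝ => b.re * x ^ 2 + c.re * x) l atBot) :
    Tendsto (fun x : ℝ => Complex.exp (b * x ^ 2 + c * x)) l (nhds 0) := by
  rw [tendsto_zero_iff_norm_tendsto_zero]
  have : Tendsto (fun x : ℝ => Real.exp (b.re * x ^ 2 + c.re * x)) l (nhds 0) :=
    Real.tendsto_exp_atBot.comp hl
  exact this.congr (fun x => (norm_cexp_quad b c x).symm)

lemma integral_deriv_cexp_quad {b : ℂ} (hb : b.re < 0) (c : ℂ) :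
    ∫ x : ℝ, (2 * b * x + c) * Complex.exp (b * x ^ 2 + c * x) = 0 := by
  set f : ℝ → ℂ := fun x => Complex.exp (b * x ^ 2 + c * x) with hf
  set f' : ℝ → ℂ := fun x => (2 * b * x + c) * Complex.exp (b * x ^ 2 + c * x) with hf'
  have hderiv : ∀ x : ℝ, HasDerivAt f (f' x) x := by
    intro x
    have hC : HasDerivAt (fun z : ℂ => b * z ^ 2 + c * z) (2 * b * x + c) (x : ℂ) := by
      have := ((hasDerivAt_pow 2 (x : ℂ)).const_mul b).add ((hasDerivAt_id (x : ℂ)).const_mul c)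
      refine HasDerivAt.congr_deriv this ?_
      push_cast
      ring
    have h2 : HasDerivAt (fun y : ℝ => b * (y : ℂ) ^ 2 + c * y) (2 * b * x + c) x :=
      hC.comp_ofReal
    have := h2.cexp
    convert this using 1
    simp only [hf', hf]
    ring
  have hint : Integrable f' := by
    have h1 := (integrable_id_mul_cexp_quad hb c).const_mul (2 * b)
    have h2 : Integrable (fun x : ℝ => c * Complex.exp (b * x ^ 2 + c * x)) := by
      simpa using (integrable_cexp_quadratic' hb c 0).const_mul c
    refine (h1.add h2).congr (Filter.Eventually.of_forall fun x => ?_)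
    simp only [hf', Pi.add_apply]
    ring
  have htop : Tendsto f atTop (nhds 0) :=
    tendsto_cexp_quad_zero c _ (tendsto_quad_atBot_atTop hb c.re)
  have hbot : Tendsto f atBot (nhds 0) :=
    tendsto_cexp_quad_zero c _ (tendsto_quad_atBot_atBot hb c.re)
  have hIoi : ∫ x in Set.Ioi (0:ℝ), f' x = 0 - f 0 :=
    integral_Ioi_of_hasDerivAt_of_tendsto (hderiv 0).continuousAt.continuousWithinAt
      (fun x _ => hderiv x) hint.integrableOn htop
  have hIic : ∫ x in Set.Iic (0:ℝ), f' x = f 0 - 0 :=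
    integral_Iic_of_hasDerivAt_of_tendsto (hderiv 0).continuousAt.continuousWithinAt
      (fun x _ => hderiv x) hint.integrableOn hbot
  have := intervalIntegral.integral_Iic_add_Ioi (b := (0:ℝ)) (f := f') (μ := volume)
    hint.integrableOn hint.integrableOn
  rw [← this, hIoi, hIic]
  ring

lemma integral_id_mul_cexp_quad {b : ℂ} (hb : b.re < 0) (c : ℂ) :
    ∫ x : ℝ, (x : ℂ) * Complex.exp (b * x ^ 2 + c * x)
      = (-c / (2 * b)) * ∫ x : ℝ, Complex.exp (b * x ^ 2 + c * x) := by
  have hb0 : b ≠ 0 := fun h => by rw [h] at hb; simp at hb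
  have h0 := integral_deriv_cexp_quad hb c
  have h1 := (integrable_id_mul_cexp_quad hb c).const_mul (2 * b)
  have h2 : Integrable (fun x : ℝ => c * Complex.exp (b * x ^ 2 + c * x)) := by
    simpa using (integrable_cexp_quadratic' hb c 0).const_mul c
  have h0' : ∫ x : ℝ, (2 * b * ((x : ℂ) * Complex.exp (b * x ^ 2 + c * x))
      + c * Complex.exp (b * x ^ 2 + c * x)) = 0 := by
    rw [← h0]; congr 1; funext x; ring
  rw [integral_add h1 h2, integral_const_mul, integral_const_mul] at h0'
  have h2b : (2 : ℂ) * b ≠ 0 := by simp [hb0]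
  have hI : ∫ x : ℝ, (x : ℂ) * Complex.exp (b * x ^ 2 + c * x)
      = (-(c * ∫ x : ℝ, Complex.exp (b * x ^ 2 + c * x))) / (2 * b) := by
    rw [eq_div_iff h2b]
    linear_combination h0'
  rw [hI]
  ring


-- generic reduction of gaussianReal integral to Lebesgue
lemma integral_gaussianReal_complex (g : ℝ → ℂ) :
    ∫ z, g z ∂(gaussianReal 0 1)
      = ∫ z : ℝ, (gaussianPDFReal 0 1 z : ℂ) * g z := by
  rw [gaussianReal_of_var_ne_zero 0 one_ne_zero]
  have hpdf : gaussianPDF 0 1 = fun x => ((gaussianPDFReal 0 1 x).toNNReal : ENNReal) := rfl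
  rw [hpdf, integral_withDensity_eq_integral_smul
    ((measurable_gaussianPDFReal 0 1).real_toNNReal) g]
  congr 1
  funext x
  rw [NNReal.smul_def, Real.coe_toNNReal _ (gaussianPDFReal_nonneg 0 1 x),
    Complex.real_smul]


/-- Gaussian integration-by-parts (Malliavin duality) identity for the Milstein increment
`S(z) = σ√Δ z + σ²Δ(z²−1)/2`:
`∫ z exp(iνS(z)) dμ(z) = (iνσ√Δ/(1 − iνσ²Δ)) ∫ exp(iνS(z)) dμ(z)`. -/
theorem stmt_13 (σ Δ ν : ℝ) (hσ : 0 < σ) (hΔ : 0 < Δ) :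
    ∫ z, (z : ℂ) * Complex.exp (Complex.I * ν *
          ((σ : ℂ) * Real.sqrt Δ * z + (1 / 2 : ℂ) * σ ^ 2 * Δ * (z ^ 2 - 1)))
        ∂(gaussianReal 0 1)
      = (Complex.I * ν * σ * Real.sqrt Δ / (1 - Complex.I * ν * σ ^ 2 * Δ)) *
          ∫ z, Complex.exp (Complex.I * ν *
            ((σ : ℂ) * Real.sqrt Δ * z + (1 / 2 : ℂ) * σ ^ 2 * Δ * (z ^ 2 - 1)))
          ∂(gaussianReal 0 1) := by
  set b : ℂ := Complex.I * ν * σ ^ 2 * Δ / 2 - 1 / 2 with hbdef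
  set c : ℂ := Complex.I * ν * σ * Real.sqrt Δ with hcdef
  have hb : b.re < 0 := by
    simp [hbdef, Complex.div_re, Complex.sub_re, Complex.mul_re, ← Complex.ofReal_pow]
  set K : ℂ := ((Real.sqrt (2 * π))⁻¹ : ℝ) * Complex.exp (-(Complex.I * ν * σ ^ 2 * Δ) / 2)
    with hKdef
  have key : ∀ z : ℝ,
      (gaussianPDFReal 0 1 z : ℂ) * Complex.exp (Complex.I * ν *
          ((σ : ℂ) * Real.sqrt Δ * z + (1 / 2 : ℂ) * σ ^ 2 * Δ * (z ^ 2 - 1)))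
        = K * Complex.exp (b * z ^ 2 + c * z) := by
    intro z
    have hpdf : (gaussianPDFReal 0 1 z : ℂ)
        = ((Real.sqrt (2 * π))⁻¹ : ℝ) * Complex.exp (-(z : ℂ) ^ 2 / 2) := by
      rw [gaussianPDFReal]
      push_cast [Complex.ofReal_exp]
      norm_num
    rw [hpdf, hKdef]
    have hE : Complex.exp (-(z : ℂ) ^ 2 / 2) * Complex.exp (Complex.I * ν *
          ((σ : ℂ) * Real.sqrt Δ * z + (1 / 2 : ℂ) * σ ^ 2 * Δ * (z ^ 2 - 1)))
        = Complex.exp (-(Complex.I * ν * σ ^ 2 * Δ) / 2)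
          * Complex.exp (b * z ^ 2 + c * z) := by
      rw [← Complex.exp_add, ← Complex.exp_add]
      congr 1
      simp only [hbdef, hcdef]
      push_cast
      ring
    rw [mul_assoc, hE, ← mul_assoc]
  have keyz : ∀ z : ℝ,
      (gaussianPDFReal 0 1 z : ℂ) * ((z : ℂ) * Complex.exp (Complex.I * ν *
          ((σ : ℂ) * Real.sqrt Δ * z + (1 / 2 : ℂ) * σ ^ 2 * Δ * (z ^ 2 - 1))))
        = K * ((z : ℂ) * Complex.exp (b * z ^ 2 + c * z)) := by
    intro z
    have := key z
    calc (gaussianPDFReal 0 1 z : ℂ) * ((z : ℂ) * _) = (z : ℂ) * ((gaussianPDFReal 0 1 z : ℂ)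
        * Complex.exp (Complex.I * ν *
          ((σ : ℂ) * Real.sqrt Δ * z + (1 / 2 : ℂ) * σ ^ 2 * Δ * (z ^ 2 - 1)))) := by ring
      _ = (z : ℂ) * (K * Complex.exp (b * z ^ 2 + c * z)) := by rw [this]
      _ = _ := by ring
  rw [integral_gaussianReal_complex, integral_gaussianReal_complex]
  calc ∫ z : ℝ, (gaussianPDFReal 0 1 z : ℂ) * ((z : ℂ) * Complex.exp (Complex.I * ν *
          ((σ : ℂ) * Real.sqrt Δ * z + (1 / 2 : ℂ) * σ ^ 2 * Δ * (z ^ 2 - 1))))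
      = ∫ z : ℝ, K * ((z : ℂ) * Complex.exp (b * z ^ 2 + c * z)) := by
        exact integral_congr_ae (Filter.Eventually.of_forall fun z => keyz z)
    _ = K * ∫ z : ℝ, (z : ℂ) * Complex.exp (b * z ^ 2 + c * z) := integral_const_mul K _
    _ = K * ((-c / (2 * b)) * ∫ z : ℝ, Complex.exp (b * z ^ 2 + c * z)) := by
        rw [integral_id_mul_cexp_quad hb c]
    _ = (Complex.I * ν * σ * Real.sqrt Δ / (1 - Complex.I * ν * σ ^ 2 * Δ)) *
          (K * ∫ z : ℝ, Complex.exp (b * z ^ 2 + c * z)) := by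
        have hne : (1 : ℂ) - Complex.I * ν * σ ^ 2 * Δ ≠ 0 := by
          intro h
          have := congrArg Complex.re h
          simp [Complex.sub_re, Complex.mul_re, ← Complex.ofReal_pow] at this
        have hb0 : (2 : ℂ) * b ≠ 0 := by
          rw [hbdef]
          intro h
          apply hne
          have : Complex.I * ν * σ ^ 2 * Δ - 1 = 0 := by
            field_simp at h
            linear_combination h
          linear_combination -this
        have hcoef : -c / (2 * b)
            = Complex.I * ν * σ * Real.sqrt Δ / (1 - Complex.I * ν * σ ^ 2 * Δ) := by
          rw [hcdef, hbdef, div_eq_div_iff (by simpa [hbdef] using hb0) hne]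
          ring
        rw [hcoef]; ring
    _ = _ := by
        rw [← integral_const_mul K]
        exact congrArg _ (integral_congr_ae (Filter.Eventually.of_forall fun z => (key z).symm))
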